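/- Let $k, r$ be positive integers with $r \leq k$. Then for every integer $h \geq \max\{r, 2\}$ and every set $A$ of integers with $|A| = k$, we have $|h^{(\geq r)}A| \geq h(k-1) - r(r-1) + 1$. -/

import Mathlib

open Pointwise

/-- The generalized sumset `h^{(≥ r)}A`: elements expressible as a sum of `h` elements of `A`
(with repetition allowed) using at least `r` distinct elements of `A`. -/
def genSumset {G : Type*} [AddCommGroup G] [DecidableEq G] (h r : ℕ) (A : Finset G) : Set G :=
  {x | ∃ s : Multiset G, s.toFinset ⊆ A ∧ Multiset.card s = h ∧
      r ≤ s.toFinset.card ∧ s.sum = x}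

/-- The `h`-fold sumset `hA`: sums of `h` elements of `A` with repetition allowed
(with the convention `0A = {0}`). -/
def hfoldSumset {G : Type*} [AddCommGroup G] [DecidableEq G] (h : ℕ) (A : Finset G) : Set G :=
  {x | ∃ s : Multiset G, s.toFinset ⊆ A ∧ Multiset.card s = h ∧ s.sum = x}

/-- The `h`-fold restricted sumset `h^A`: sums of `h` pairwise distinct elements of `A`
(with the convention `0^A = {0}`). -/
def restrictedSumset {G : Type*} [AddCommGroup G] [DecidableEq G] (r : ℕ) (A : Finset G) : Set G :=
  {x | ∃ s : Finset G, s ⊆ A ∧ s.card = r ∧ ∑ a ∈ s, a = x}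


namespace GenSumAux
open Finset


lemma divmod_step (D n t : ℕ) (ht : t + 1 ≤ n * D) :
    (min ((t+1)/D) (n-1) = min (t/D) (n-1) ∧
      (t+1) - (min ((t+1)/D) (n-1)) * D = (t - (min (t/D) (n-1)) * D) + 1 ∧
      (t - (min (t/D) (n-1)) * D) + 1 ≤ D) ∨
    (min ((t+1)/D) (n-1) = min (t/D) (n-1) + 1 ∧ min (t/D) (n-1) + 1 ≤ n - 1 ∧
      t - (min (t/D) (n-1)) * D = D - 1 ∧ (t+1) - (min ((t+1)/D) (n-1)) * D = 0) := by
  have hD : 0 < D := by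
    rcases Nat.eq_zero_or_pos D with h | h
    · subst h; simp at ht
    · exact h
  have hn : 0 < n := by
    rcases Nat.eq_zero_or_pos n with h | h
    · subst h; simp at ht
    · exact h
  set a := t / D with ha
  have hmod : D * a + t % D = t := Nat.div_add_mod t D
  have hb : t % D < D := Nat.mod_lt _ hD
  have halt : a < n := by
    rw [ha, Nat.div_lt_iff_lt_mul hD]
    omega
  have hmin : min a (n-1) = a := by omega
  by_cases hcase : t % D + 1 < D
  · -- within block
    have hdiv : (t+1) / D = a := by
      have h0 : t + 1 = D * a + (t % D + 1) := by omega
      rw [h0, Nat.mul_add_div hD, Nat.div_eq_of_lt hcase]; omega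
    left
    rw [hdiv, hmin]
    have h1 : a * D = D * a := by ring
    omega
  · -- t % D + 1 = D
    have hbd : t % D + 1 = D := by omega
    have hdiv : (t+1) / D = a + 1 := by
      have hmul : D * (a + 1) = D * a + D := by ring
      have h0 : t + 1 = D * (a + 1) := by omega
      rw [h0, Nat.mul_div_cancel_left _ hD]
    rcases Nat.lt_or_ge (a+1) n with hlt | hge
    · right
      have hmin2 : min ((t+1)/D) (n-1) = a + 1 := by rw [hdiv]; omega
      rw [hmin2, hmin]
      have h1 : a * D = D * a := by ring
      have h2 : (a+1) * D = D * a + D := by ring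
      refine ⟨rfl, by omega, by omega, by omega⟩
    · -- a + 1 = n : endpoint
      left
      have han : a + 1 = n := by omega
      have hmin2 : min ((t+1)/D) (n-1) = a := by rw [hdiv]; omega
      rw [hmin2, hmin]
      have h1 : a * D = D * a := by ring
      omega

lemma mixS_le (D n t : ℕ) (ht : t ≤ n * D) : t - min (t/D) (n-1) * D ≤ D := by
  rcases Nat.eq_zero_or_pos D with hD | hD
  · subst hD; simp at ht; omega
  rcases Nat.eq_zero_or_pos n with hn | hn
  · subst hn; simp at ht; omega
  have hmod : D * (t/D) + t % D = t := Nat.div_add_mod t D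
  have hb : t % D < D := Nat.mod_lt _ hD
  rcases le_or_gt (t/D) (n-1) with hle | hlt
  · rw [min_eq_left hle]
    have h1 : (t/D) * D = D * (t/D) := by ring
    omega
  · rw [min_eq_right (le_of_lt hlt)]
    have h1 : (n-1+1) * D = n * D := by congr 1; omega
    have h2 : (n-1+1) * D = (n-1)*D + D := by ring
    have h3 : (t/D) * D = D * (t/D) := by ring
    have h4 : (n-1) * D ≤ (t/D) * D := Nat.mul_le_mul_right _ (le_of_lt hlt)
    omega




variable (A : Finset ℤ) (k : ℕ)

noncomputable def EE (hA : A.card = k) (hk : 1 ≤ k) (i : ℕ) : ℤ :=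
  A.orderEmbOfFin hA ⟨min i (k-1), by omega⟩

variable (hA : A.card = k) (hk : 1 ≤ k)

lemma EE_mem (i : ℕ) : EE A k hA hk i ∈ A := Finset.orderEmbOfFin_mem A hA _

lemma EE_lt {i j : ℕ} (hij : i < j) (hj : j ≤ k-1) :
    EE A k hA hk i < EE A k hA hk j := by
  apply (A.orderEmbOfFin hA).strictMono
  rw [Fin.mk_lt_mk]
  omega

lemma EE_injOn (s : Finset ℕ) (hs : ∀ i ∈ s, i ≤ k-1) :
    Set.InjOn (EE A k hA hk) s := by
  intro x hx y hy hxy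
  have h1 := (A.orderEmbOfFin hA).injective hxy
  have h2 : min x (k-1) = min y (k-1) := congrArg Fin.val h1
  have hx' := hs x hx
  have hy' := hs y hy
  omega




def bSet (k r q s : ℕ) : Finset ℕ :=
  (range (r-1-q) ∪ {r-1-q+s}) ∪ Ico (k-q) k

lemma bSet_mem {k r q s : ℕ} (hr : 1 ≤ r) (hrk : r ≤ k) (hq : q ≤ r-1) (hs : s ≤ k-r) :
    ∀ i ∈ bSet k r q s, i ≤ k-1 := by
  intro i hi
  simp only [bSet, mem_union, mem_range, mem_singleton, mem_Ico] at hi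
  omega

lemma bSet_disj1 {r q s : ℕ} : Disjoint (range (r-1-q)) ({r-1-q+s} : Finset ℕ) := by
  simp only [disjoint_singleton_right, mem_range]
  omega

lemma bSet_disj2 {k r q s : ℕ} (hr : 1 ≤ r) (hrk : r ≤ k) (hq : q ≤ r-1) (hs : s ≤ k-r) :
    Disjoint (range (r-1-q) ∪ {r-1-q+s}) (Ico (k-q) k) := by
  rw [disjoint_left]
  intro i hi hi2
  simp only [mem_union, mem_range, mem_singleton] at hi
  simp only [mem_Ico] at hi2
  omega

lemma bSet_card {k r q s : ℕ} (hr : 1 ≤ r) (hrk : r ≤ k) (hq : q ≤ r-1) (hs : s ≤ k-r) :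
    (bSet k r q s).card = r := by
  rw [bSet, card_union_of_disjoint (bSet_disj2 hr hrk hq hs),
    card_union_of_disjoint bSet_disj1, card_range, card_singleton, Nat.card_Ico]
  omega

lemma bSet_sum {k r q s : ℕ} (f : ℕ → ℤ) (hr : 1 ≤ r) (hrk : r ≤ k) (hq : q ≤ r-1) (hs : s ≤ k-r) :
    ∑ i ∈ bSet k r q s, f i
      = (∑ i ∈ range (r-1-q), f i) + f (r-1-q+s) + ∑ i ∈ Ico (k-q) k, f i := by
  rw [bSet, sum_union (bSet_disj2 hr hrk hq hs), sum_union bSet_disj1, sum_singleton]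

lemma bStepA {k r q s : ℕ} (hr : 1 ≤ r) (hrk : r ≤ k) (hq : q ≤ r-1)
    (hs : s + 1 ≤ k-r) (f : ℕ → ℤ) (hf : f (r-1-q+s) < f (r-1-q+(s+1))) :
    ∑ i ∈ bSet k r q s, f i < ∑ i ∈ bSet k r q (s+1), f i := by
  rw [bSet_sum f hr hrk hq (by omega), bSet_sum f hr hrk hq hs]
  linarith



lemma bStepB {k r q : ℕ} (hr : 1 ≤ r) (hrk : r < k) (hq : q + 1 ≤ r-1) (f : ℕ → ℤ)
    (hf : f (k-q-2) < f (k-q-1)) :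
    ∑ i ∈ bSet k r q (k-r-1), f i < ∑ i ∈ bSet k r (q+1) 0, f i := by
  rw [bSet_sum f hr (le_of_lt hrk) (by omega : q ≤ r-1) (by omega : k-r-1 ≤ k-r),
      bSet_sum f hr (le_of_lt hrk) hq (by omega : 0 ≤ k-r)]
  have e1 : r-1-q = (r-2-q)+1 := by omega
  rw [e1, sum_range_succ]
  have e2 : r-1-(q+1) = r-2-q := by omega
  have e3 : (r-2-q)+1+(k-r-1) = k-q-2 := by omega
  have e5 : ∑ i ∈ Ico (k-(q+1)) k, f i = f (k-q-1) + ∑ i ∈ Ico (k-q) k, f i := by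
    rw [Finset.sum_eq_sum_Ico_succ_bot (show k-(q+1) < k by omega)]
    have e6 : k-(q+1)+1 = k-q := by omega
    have e7 : k-(q+1) = k-q-1 := by omega
    rw [e6, e7]
  rw [e2, e3, add_zero, e5]
  linarith




def cMul (k n q s : ℕ) : Multiset ℕ :=
  s ::ₘ (Multiset.replicate q (k-1) + Multiset.replicate (n-1-q) 0)

lemma cMul_card {k n q s : ℕ} (hn : 1 ≤ n) (hq : q ≤ n-1) :
    Multiset.card (cMul k n q s) = n := by
  simp [cMul]
  omega

lemma cMul_mem {k n q s i : ℕ} (hs : s ≤ k-1) (hi : i ∈ cMul k n q s) : i ≤ k-1 := by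
  simp only [cMul, Multiset.mem_cons, Multiset.mem_add, Multiset.mem_replicate] at hi
  rcases hi with h | h | h <;> omega

lemma cMul_sum {k n q s : ℕ} (f : ℕ → ℤ) :
    ((cMul k n q s).map f).sum = f s + q • f (k-1) + (n-1-q) • f 0 := by
  simp [cMul, Multiset.map_replicate, add_assoc]

lemma cStepA {k n q s : ℕ} (f : ℕ → ℤ) (hf : f s < f (s+1)) :
    ((cMul k n q s).map f).sum < ((cMul k n q (s+1)).map f).sum := by
  rw [cMul_sum, cMul_sum]
  linarith

lemma cStepB {k n q : ℕ} (hq : q + 1 ≤ n-1) (f : ℕ → ℤ) (hf : f (k-2) < f (k-1)) :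
    ((cMul k n q (k-2)).map f).sum < ((cMul k n (q+1) 0).map f).sum := by
  rw [cMul_sum, cMul_sum]
  have e1 : n-1-q = (n-1-(q+1))+1 := by omega
  rw [e1, succ_nsmul, succ_nsmul]
  linarith


def bFin (k r t : ℕ) : Finset ℕ :=
  bSet k r (min (t/(k-r)) (r-1)) (t - min (t/(k-r)) (r-1) * (k-r))

def cIdx (k h r t : ℕ) : Multiset ℕ :=
  if h - r = 0 then 0
  else cMul k (h-r) (min (t/(k-1)) (h-r-1)) (t - min (t/(k-1)) (h-r-1) * (k-1))

lemma bFin_card {k r t : ℕ} (hr : 1 ≤ r) (hrk : r ≤ k) (ht : t ≤ r * (k-r)) :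
    (bFin k r t).card = r :=
  bSet_card hr hrk (min_le_right _ _) (mixS_le _ _ _ ht)

lemma bFin_mem {k r t : ℕ} (hr : 1 ≤ r) (hrk : r ≤ k) (ht : t ≤ r * (k-r)) :
    ∀ i ∈ bFin k r t, i ≤ k-1 :=
  bSet_mem hr hrk (min_le_right _ _) (mixS_le _ _ _ ht)

lemma bFin_mono {k r t : ℕ} (hr : 1 ≤ r) (hrk : r ≤ k) (ht : t + 1 ≤ r * (k-r)) (f : ℕ → ℤ)
    (hf : ∀ i j, i < j → j ≤ k-1 → f i < f j) :
    ∑ i ∈ bFin k r t, f i < ∑ i ∈ bFin k r (t+1), f i := by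
  rcases divmod_step (k-r) r t ht with ⟨ha1, ha2, ha3⟩ | ⟨hb1, hb2, hb3, hb4⟩
  · unfold bFin
    rw [ha2, ha1]
    obtain ⟨q, hqd⟩ : ∃ q', min (t/(k-r)) (r-1) = q' := ⟨_, rfl⟩
    have hq : q ≤ r - 1 := hqd ▸ min_le_right _ _
    rw [hqd] at ha3 ⊢
    obtain ⟨s, hsd⟩ : ∃ s', t - q * (k-r) = s' := ⟨_, rfl⟩
    rw [hsd] at ha3 ⊢
    refine bStepA hr hrk hq ha3 f ?_
    apply hf
    · omega
    · omega
  · have hrklt : r < k := by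
      rcases Nat.lt_or_ge r k with h | h
      · exact h
      · exfalso
        have hz : k - r = 0 := by omega
        rw [hz, Nat.mul_zero] at ht
        omega
    unfold bFin
    rw [hb4, hb1, hb3]
    obtain ⟨q, hqd⟩ : ∃ q', min (t/(k-r)) (r-1) = q' := ⟨_, rfl⟩
    rw [hqd] at hb2 ⊢
    refine bStepB hr hrklt hb2 f ?_
    apply hf
    · omega
    · omega

lemma cIdx_card {k h r t : ℕ} : Multiset.card (cIdx k h r t) = h - r := by
  unfold cIdx
  by_cases h0 : h - r = 0
  · simp [h0]
  · rw [if_neg h0]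
    exact cMul_card (by omega) (min_le_right _ _)

lemma cIdx_mem {k h r t : ℕ} (ht : t ≤ (h-r) * (k-1)) :
    ∀ i ∈ cIdx k h r t, i ≤ k-1 := by
  intro i hi
  unfold cIdx at hi
  by_cases h0 : h - r = 0
  · rw [if_pos h0] at hi
    simp at hi
  · rw [if_neg h0] at hi
    exact cMul_mem (mixS_le _ _ _ ht) hi

lemma cIdx_mono {k h r t : ℕ} (ht : t + 1 ≤ (h-r) * (k-1)) (f : ℕ → ℤ)
    (hf : ∀ i j, i < j → j ≤ k-1 → f i < f j) :
    ((cIdx k h r t).map f).sum < ((cIdx k h r (t+1)).map f).sum := by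
  have h0 : h - r ≠ 0 := by
    intro h0
    rw [h0, Nat.zero_mul] at ht
    omega
  have hk2 : 1 ≤ k - 1 := by
    rcases Nat.eq_zero_or_pos (k-1) with h1 | h1
    · rw [h1, Nat.mul_zero] at ht
      omega
    · exact h1
  unfold cIdx
  rw [if_neg h0, if_neg h0]
  rcases divmod_step (k-1) (h-r) t ht with ⟨ha1, ha2, ha3⟩ | ⟨hb1, hb2, hb3, hb4⟩
  · rw [ha2, ha1]
    exact cStepA f (hf _ _ (Nat.lt_succ_self _) ha3)
  · rw [hb4, hb1, hb3]
    have e5 : k - 1 - 1 = k - 2 := by omega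
    rw [e5]
    exact cStepB hb2 f (hf _ _ (by omega) (by omega))

lemma arith (h k r : ℕ) (hr : 1 ≤ r) (hrk : r ≤ k) (hrh : r ≤ h) :
    h * (k-1) - r*(r-1) ≤ (h-r)*(k-1) + r*(k-r) := by
  obtain ⟨u, rfl⟩ : ∃ u, h = r + u := ⟨h - r, by omega⟩
  obtain ⟨v, rfl⟩ : ∃ v, k = r + v := ⟨k - r, by omega⟩
  obtain ⟨w, rfl⟩ : ∃ w, r = w + 1 := ⟨r - 1, by omega⟩
  have e1 : w + 1 + v - 1 = w + v := by omega
  have e2 : w + 1 - 1 = w := by omega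
  have e3 : w + 1 + u - (w+1) = u := by omega
  have e4 : w + 1 + v - (w+1) = v := by omega
  rw [e1, e2, e3, e4]
  have key : (w+1+u)*(w+v) = (w+1)*w + ((w+1)*v + u*(w+v)) := by ring
  omega

end GenSumAux

namespace GenSumAux
open Finset

lemma chain_le_ncard (S : Set ℤ) (hS : S.Finite) (f : ℕ → ℤ) (N : ℕ)
    (hmem : ∀ t, t ≤ N → f t ∈ S) (hmono : ∀ t, t < N → f t < f (t+1)) :
    N + 1 ≤ S.ncard := by
  have key : ∀ j i, i < j → j ≤ N → f i < f j := by
    intro j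
    induction j with
    | zero => omega
    | succ j ih =>
      intro i hij hj
      rcases Nat.lt_or_ge i j with h1 | h1
      · exact lt_trans (ih i h1 (by omega)) (hmono j (by omega))
      · have : i = j := by omega
        subst this
        exact hmono i (by omega)
  have hinj : Set.InjOn f ↑(Finset.range (N+1)) := by
    intro x hx y hy hxy
    simp only [Finset.coe_range, Set.mem_Iio] at hx hy
    by_contra hne
    rcases Nat.lt_or_ge x y with h1 | h1
    · exact absurd hxy (ne_of_lt (key y x h1 (by omega)))
    · have h2 : y < x := by omega
      exact absurd hxy.symm (ne_of_lt (key x y h2 (by omega)))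
  have hcard : ((Finset.range (N+1)).image f).card = N + 1 := by
    rw [Finset.card_image_of_injOn hinj, Finset.card_range]
  rw [← hcard, ← Set.ncard_coe_finset]
  apply Set.ncard_le_ncard _ hS
  intro x hx
  simp only [Finset.coe_image, Set.mem_image, Finset.coe_range, Set.mem_Iio] at hx
  obtain ⟨t, ht, rfl⟩ := hx
  exact hmem t (by omega)

lemma genSumset_finite (h r : ℕ) (A : Finset ℤ) (hne : A.Nonempty) :
    (genSumset h r A).Finite := by
  apply Set.Finite.subset (Set.finite_Icc (h • A.min' hne) (h • A.max' hne))
  rintro x ⟨s, hsub, hcard, -, hsum⟩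
  constructor
  · calc h • A.min' hne = Multiset.card s • A.min' hne := by rw [hcard]
    _ ≤ s.sum := Multiset.card_nsmul_le_sum
        (fun y hy => A.min'_le y (hsub (Multiset.mem_toFinset.mpr hy)))
    _ = x := hsum
  · calc x = s.sum := hsum.symm
    _ ≤ Multiset.card s • A.max' hne := Multiset.sum_le_card_nsmul _ _
        (fun y hy => A.le_max' y (hsub (Multiset.mem_toFinset.mpr hy)))
    _ = h • A.max' hne := by rw [hcard]

end GenSumAux

theorem genSumset_card_lower_bound_int (k r : ℕ) (hk : 1 ≤ k) (hr : 1 ≤ r) (hrk : r ≤ k)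
    (h : ℕ) (hh : max r 2 ≤ h) (A : Finset ℤ) (hA : A.card = k) :
    h * (k - 1) - r * (r - 1) + 1 ≤ (genSumset h r A).ncard := by
  classical
  have hhr : r ≤ h := le_trans (le_max_left r 2) hh
  have hne : A.Nonempty := Finset.card_pos.mp (by omega)
  set E : ℕ → ℤ := GenSumAux.EE A k hA hk with hE
  have hEmono : ∀ i j, i < j → j ≤ k-1 → E i < E j :=
    fun i j h1 h2 => GenSumAux.EE_lt A k hA hk h1 h2
  set Q : ℕ := (h - r) * (k - 1) with hQdef
  set P : ℕ := r * (k - r) with hPdef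
  refine le_trans ?_ (GenSumAux.chain_le_ncard (genSumset h r A)
    (GenSumAux.genSumset_finite h r A hne)
    (fun t => (Multiset.map E ((GenSumAux.bFin k r (t - Q)).val
      + GenSumAux.cIdx k h r (min t Q))).sum) (Q + P) ?_ ?_)
  · have harith := GenSumAux.arith h k r hr hrk hhr
    omega
  · -- membership
    intro t ht
    simp only [genSumset, Set.mem_setOf_eq]
    refine ⟨_, ?_, ?_, ?_, rfl⟩
    · intro x hx
      rw [Multiset.mem_toFinset] at hx
      obtain ⟨i, -, rfl⟩ := Multiset.mem_map.mp hx
      exact GenSumAux.EE_mem A k hA hk i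
    · rw [Multiset.card_map, Multiset.card_add]
      have h1 : Multiset.card (GenSumAux.bFin k r (t-Q)).val = r :=
        GenSumAux.bFin_card hr hrk (by omega)
      have h2 : Multiset.card (GenSumAux.cIdx k h r (min t Q)) = h - r :=
        GenSumAux.cIdx_card
      omega
    · rw [Multiset.toFinset_map, Multiset.toFinset_add, Finset.val_toFinset]
      have h2 : (Finset.image E (GenSumAux.bFin k r (t-Q))).card = r := by
        rw [Finset.card_image_of_injOn
          (GenSumAux.EE_injOn A k hA hk _ (GenSumAux.bFin_mem hr hrk (by omega)))]
        exact GenSumAux.bFin_card hr hrk (by omega)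
      calc r = (Finset.image E (GenSumAux.bFin k r (t-Q))).card := h2.symm
        _ ≤ _ := Finset.card_le_card (Finset.image_subset_image Finset.subset_union_left)
  · -- monotonicity
    intro t ht
    rw [Multiset.map_add, Multiset.map_add, Multiset.sum_add, Multiset.sum_add]
    rcases Nat.lt_or_ge t Q with hc | hc
    · have e1 : t - Q = 0 := by omega
      have e2 : t + 1 - Q = 0 := by omega
      have e3 : min t Q = t := by omega
      have e4 : min (t+1) Q = t+1 := by omega
      rw [e1, e2, e3, e4]
      exact add_lt_add_right (GenSumAux.cIdx_mono (by omega) E hEmono) _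
    · have e3 : min t Q = Q := by omega
      have e4 : min (t+1) Q = Q := by omega
      have e5 : t + 1 - Q = (t - Q) + 1 := by omega
      rw [e3, e4, e5]
      apply add_lt_add_left
      have hb := GenSumAux.bFin_mono hr hrk (show (t-Q)+1 ≤ r*(k-r) by omega) E hEmono
      exact hb
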